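/- Suppose q_m > 0. Then, viewing A as a matrix over ℂ, the eigenvalue 1 of A has a one-dimensional eigenspace, and every eigenvalue λ of A with λ ≠ 1 satisfies |λ| < 1. -/

import Mathlib

/-- The transition matrix of the exogenous innovation–imitation model
(0-indexed: level `i : Fin m` corresponds to productivity level `i+1`). -/
def transMatrix (m : ℕ) (a : ℝ) (q : Fin m → ℝ) : Matrix (Fin m) (Fin m) ℝ :=
  fun i j =>
    (if (j : ℕ) = 0 then q i * (1 - a) else 0) +
    (if i = j then a else 0) +
    (if (j : ℕ) = (i : ℕ) + 1 then 1 - a else 0)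

section Aux

variable {m : ℕ} {a : ℝ} {q : Fin m → ℝ}

lemma tm_mulVec (hm : 0 < m) (v : Fin m → ℂ) (i : Fin m) :
    ((transMatrix m a q).map (Complex.ofReal ·)).mulVec v i =
      (q i : ℂ) * (1 - (a : ℂ)) * v ⟨0, hm⟩ + (a : ℂ) * v i +
        (1 - (a : ℂ)) * (if h : (i : ℕ) + 1 < m then v ⟨(i : ℕ) + 1, h⟩ else 0) := by
  classical
  have e1 : (∑ j : Fin m, if (j : ℕ) = 0 then (q i : ℂ) * (1 - (a : ℂ)) * v j else 0)
      = (q i : ℂ) * (1 - (a : ℂ)) * v ⟨0, hm⟩ := by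
    have hcond : ∀ j : Fin m,
        (if (j : ℕ) = 0 then (q i : ℂ) * (1 - (a : ℂ)) * v j else 0)
          = (if j = ⟨0, hm⟩ then (q i : ℂ) * (1 - (a : ℂ)) * v j else 0) :=
      fun j => if_congr (by simp [Fin.ext_iff]) rfl rfl
    rw [Finset.sum_congr rfl (fun j _ => hcond j),
      Finset.sum_ite_eq' Finset.univ (⟨0, hm⟩ : Fin m)]
    simp
  have e2 : (∑ j : Fin m, if i = j then (a : ℂ) * v j else 0) = (a : ℂ) * v i := by
    rw [Finset.sum_ite_eq Finset.univ i]
    simp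
  have e3 : (∑ j : Fin m, if (j : ℕ) = (i : ℕ) + 1 then (1 - (a : ℂ)) * v j else 0)
      = (1 - (a : ℂ)) * (if h : (i : ℕ) + 1 < m then v ⟨(i : ℕ) + 1, h⟩ else 0) := by
    by_cases h : (i : ℕ) + 1 < m
    · have hcond : ∀ j : Fin m,
          (if (j : ℕ) = (i : ℕ) + 1 then (1 - (a : ℂ)) * v j else 0)
            = (if j = ⟨(i : ℕ) + 1, h⟩ then (1 - (a : ℂ)) * v j else 0) :=
        fun j => if_congr (by simp [Fin.ext_iff]) rfl rfl
      rw [dif_pos h, Finset.sum_congr rfl (fun j _ => hcond j),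
        Finset.sum_ite_eq' Finset.univ (⟨(i : ℕ) + 1, h⟩ : Fin m)]
      simp
    · rw [dif_neg h, mul_zero]
      exact Finset.sum_eq_zero fun j _ => if_neg (by have := j.isLt; omega)
  simp only [Matrix.mulVec, dotProduct, Matrix.map_apply, transMatrix,
    Complex.ofReal_add, apply_ite Complex.ofReal, Complex.ofReal_mul,
    Complex.ofReal_sub, Complex.ofReal_one, Complex.ofReal_zero,
    add_mul, ite_mul, zero_mul]
  rw [Finset.sum_add_distrib, Finset.sum_add_distrib, e1, e2, e3]

lemma tm_colsum (hqsum : ∑ i, q i = 1) (j : Fin m) :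
    ∑ i, transMatrix m a q i j = 1 := by
  classical
  unfold transMatrix
  rw [Finset.sum_add_distrib, Finset.sum_add_distrib]
  have e2 : (∑ i : Fin m, if i = j then a else 0) = a := by
    rw [Finset.sum_ite_eq' Finset.univ j (fun _ => a)]
    simp
  rcases Nat.eq_zero_or_pos (j : ℕ) with h0 | h0
  · have e1 : (∑ i : Fin m, if (j : ℕ) = 0 then q i * (1 - a) else 0) = 1 - a := by
      rw [Finset.sum_congr rfl fun i _ => if_pos h0, ← Finset.sum_mul, hqsum, one_mul]
    have e3 : (∑ i : Fin m, if (j : ℕ) = (i : ℕ) + 1 then 1 - a else 0) = 0 :=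
      Finset.sum_eq_zero fun i _ => if_neg (by omega)
    rw [e1, e2, e3]; ring
  · have e1 : (∑ i : Fin m, if (j : ℕ) = 0 then q i * (1 - a) else 0) = 0 :=
      Finset.sum_eq_zero fun i _ => if_neg (by omega)
    have e3 : (∑ i : Fin m, if (j : ℕ) = (i : ℕ) + 1 then 1 - a else 0) = 1 - a := by
      have hjm : (j : ℕ) - 1 < m := by have := j.isLt; omega
      have hcond : ∀ i : Fin m,
          (if (j : ℕ) = (i : ℕ) + 1 then 1 - a else 0)
            = (if i = ⟨(j : ℕ) - 1, hjm⟩ then 1 - a else 0) :=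
        fun i => if_congr (by simp [Fin.ext_iff]; omega) rfl rfl
      rw [Finset.sum_congr rfl (fun i _ => hcond i),
        Finset.sum_ite_eq' Finset.univ (⟨(j : ℕ) - 1, hjm⟩ : Fin m)]
      simp
    rw [e1, e2, e3]; ring

lemma tm_nonneg (ha : a ∈ Set.Ioo (0 : ℝ) 1) (hq : ∀ i, q i ∈ Set.Icc (0 : ℝ) 1)
    (i j : Fin m) : 0 ≤ transMatrix m a q i j := by
  unfold transMatrix
  have h1 : 0 ≤ q i * (1 - a) := mul_nonneg (hq i).1 (by linarith [ha.2])
  split_ifs <;> linarith [ha.1, ha.2]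

lemma tm_diag (ha : a ∈ Set.Ioo (0 : ℝ) 1) (hq : ∀ i, q i ∈ Set.Icc (0 : ℝ) 1)
    (i : Fin m) : a ≤ transMatrix m a q i i ∧ transMatrix m a q i i ≤ 1 := by
  unfold transMatrix
  have h3 : (if (i : ℕ) = (i : ℕ) + 1 then 1 - a else 0) = 0 := if_neg (by omega)
  have h4 : (if i = i then a else 0) = a := if_pos rfl
  rw [h3, h4]
  have h1 : 0 ≤ q i * (1 - a) := mul_nonneg (hq i).1 (by linarith [ha.2])
  have h2 : q i * (1 - a) ≤ 1 - a := by nlinarith [(hq i).2, ha.2]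
  split_ifs <;> constructor <;> linarith

end Aux

/-- If `q_m > 0`, then over `ℂ` the eigenvalue `1` of `A` has a
one-dimensional eigenspace, and every other eigenvalue `λ` satisfies
`|λ| < 1`. -/
theorem stmt6 (m : ℕ) (hm : 1 ≤ m) (a : ℝ) (ha : a ∈ Set.Ioo (0 : ℝ) 1)
    (q : Fin m → ℝ) (hq : ∀ i, q i ∈ Set.Icc (0 : ℝ) 1) (hqsum : ∑ i, q i = 1)
    (hqm : 0 < q ⟨m - 1, by omega⟩) :
    Module.finrank ℂ
        ↥(Module.End.eigenspace
            (Matrix.toLin' ((transMatrix m a q).map (Complex.ofReal ·))) 1) = 1 ∧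
      ∀ μ : ℂ,
        Module.End.HasEigenvalue
            (Matrix.toLin' ((transMatrix m a q).map (Complex.ofReal ·))) μ →
          μ ≠ 1 → ‖μ‖ < 1 := by
  classical
  obtain ⟨ha0, ha1⟩ := ha
  have hm0 : 0 < m := hm
  set A := (transMatrix m a q).map (Complex.ofReal ·) with hAdef
  have hne : (1 - (a : ℂ)) ≠ 0 := by
    have : ((1 - a : ℝ) : ℂ) ≠ 0 := Complex.ofReal_ne_zero.mpr (by linarith)
    simpa using this
  constructor
  · -- dimension of eigenspace of 1
    set z : Fin m := ⟨0, hm0⟩ with hzdef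
    set w : Fin m → ℂ := fun i => ∑ j, if i ≤ j then (q j : ℂ) else 0 with hwdef
    have hw0 : w z = 1 := by
      have h1 : ∀ j ∈ Finset.univ, (if z ≤ j then (q j : ℂ) else 0) = (q j : ℂ) :=
        fun j _ => if_pos (by simp [hzdef, Fin.le_def])
      rw [hwdef]
      simp only []
      rw [Finset.sum_congr rfl h1,
        show (∑ j, ((q j : ℝ) : ℂ)) = ((∑ j, q j : ℝ) : ℂ) by push_cast; rfl, hqsum,
        Complex.ofReal_one]
    have hrec : ∀ v : Fin m → ℂ, (Matrix.toLin' A) v = v ↔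
        ∀ i : Fin m, v i = (q i : ℂ) * v z +
          (if h : (i : ℕ) + 1 < m then v ⟨(i : ℕ) + 1, h⟩ else 0) := by
      intro v
      rw [Matrix.toLin'_apply]
      constructor
      · intro hv i
        have h1 := congrFun hv i
        rw [tm_mulVec hm0] at h1
        apply mul_left_cancel₀ hne
        linear_combination -h1
      · intro hv
        funext i
        rw [tm_mulVec hm0]
        linear_combination ((a : ℂ) - 1) * hv i
    have hwlast : ∀ i : Fin m, ¬((i : ℕ) + 1 < m) → w i = (q i : ℂ) := by
      intro i hi
      have h1 : ∀ j ∈ Finset.univ, (if i ≤ j then (q j : ℂ) else 0)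
          = (if j = i then (q j : ℂ) else 0) := by
        intro j _
        rcases eq_or_ne j i with rfl | hji
        · rw [if_pos le_rfl, if_pos rfl]
        · rw [if_neg hji, if_neg]
          intro hle
          exact hji (Fin.ext (by have := j.isLt; have := Fin.le_def.mp hle; omega))
      calc w i = ∑ j, (if j = i then (q j : ℂ) else 0) := Finset.sum_congr rfl h1
        _ = (q i : ℂ) := by rw [Finset.sum_ite_eq' Finset.univ i]; simp
    have hwstep : ∀ (i : Fin m) (h : (i : ℕ) + 1 < m),
        w i = (q i : ℂ) + w ⟨(i : ℕ) + 1, h⟩ := by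
      intro i h
      have h1 : ∀ j ∈ Finset.univ, (if i ≤ j then (q j : ℂ) else 0)
          = (if j = i then (q j : ℂ) else 0)
            + (if (⟨(i : ℕ) + 1, h⟩ : Fin m) ≤ j then (q j : ℂ) else 0) := by
        intro j _
        rcases eq_or_ne j i with rfl | hji
        · rw [if_pos le_rfl, if_pos rfl,
            if_neg (fun hle => by
              have h2 := Fin.le_def.mp hle
              simp only [Fin.val_mk] at h2
              omega), add_zero]
        · rw [if_neg hji]
          by_cases hle : i ≤ j
          · rw [if_pos hle, if_pos (show (⟨(i : ℕ) + 1, h⟩ : Fin m) ≤ j by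
              rw [Fin.le_def]
              have h2 := Fin.le_def.mp hle
              have h3 : (j : ℕ) ≠ (i : ℕ) := fun hh => hji (Fin.ext hh)
              simp only [Fin.val_mk]
              omega), zero_add]
          · rw [if_neg hle, if_neg (fun hle2 => hle (by
              rw [Fin.le_def]
              have h2 := Fin.le_def.mp hle2
              simp only [Fin.val_mk] at h2
              omega)), add_zero]
      calc w i = ∑ j, ((if j = i then (q j : ℂ) else 0)
            + (if (⟨(i : ℕ) + 1, h⟩ : Fin m) ≤ j then (q j : ℂ) else 0)) :=
          Finset.sum_congr rfl h1
        _ = (q i : ℂ) + w ⟨(i : ℕ) + 1, h⟩ := by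
          rw [Finset.sum_add_distrib, Finset.sum_ite_eq' Finset.univ i]
          simp [hwdef]
    have hwmem : ∀ i : Fin m, w i = (q i : ℂ) * w z +
        (if h : (i : ℕ) + 1 < m then w ⟨(i : ℕ) + 1, h⟩ else 0) := by
      intro i
      rw [hw0, mul_one]
      by_cases h : (i : ℕ) + 1 < m
      · rw [dif_pos h]; exact hwstep i h
      · rw [dif_neg h, add_zero]; exact hwlast i h
    have hspan : Module.End.eigenspace (Matrix.toLin' A) 1 = Submodule.span ℂ {w} := by
      apply le_antisymm
      · intro v hv
        rw [Module.End.mem_eigenspace_iff, one_smul] at hv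
        have hv' := (hrec v).mp hv
        have main : ∀ k : ℕ, ∀ i : Fin m, m ≤ (i : ℕ) + k + 1 → v i = v z * w i := by
          intro k
          induction k with
          | zero =>
            intro i hi
            have hlt : ¬((i : ℕ) + 1 < m) := by omega
            rw [hv' i, dif_neg hlt, hwlast i hlt, add_zero, mul_comm]
          | succ k ih =>
            intro i hi
            by_cases h : (i : ℕ) + 1 < m
            · rw [hv' i, dif_pos h,
                ih ⟨(i : ℕ) + 1, h⟩ (show m ≤ (i : ℕ) + 1 + k + 1 by omega), hwstep i h]
              ring
            · rw [hv' i, dif_neg h, hwlast i h, add_zero, mul_comm]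
        rw [Submodule.mem_span_singleton]
        refine ⟨v z, funext fun i => ?_⟩
        simp only [Pi.smul_apply, smul_eq_mul]
        exact (main m i (by omega)).symm
      · rw [Submodule.span_singleton_le_iff_mem, Module.End.mem_eigenspace_iff, one_smul]
        exact (hrec w).mpr hwmem
    have hwne : w ≠ 0 := by
      intro h
      rw [h] at hw0
      simp at hw0
    rw [hspan, finrank_span_singleton hwne]
  · -- all other eigenvalues have modulus < 1
    intro μ hμ hμ1
    obtain ⟨v, hv⟩ := hμ.exists_hasEigenvector
    have hAv : A.mulVec v = μ • v := by
      rw [← Matrix.toLin'_apply]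
      exact hv.apply_eq_smul
    have hdet : (A - μ • 1).det = 0 := by
      rw [← Matrix.exists_mulVec_eq_zero_iff]
      exact ⟨v, hv.2, by
        rw [Matrix.sub_mulVec, Matrix.smul_mulVec, Matrix.one_mulVec, hAv, sub_self]⟩
    obtain ⟨u, hu0, huA⟩ := Matrix.exists_vecMul_eq_zero_iff.mpr hdet
    have hkey : ∀ i : Fin m, ∑ j, u j * A j i = μ * u i := by
      intro i
      have hsm : Matrix.vecMul u (μ • (1 : Matrix (Fin m) (Fin m) ℂ)) = μ • u := by
        funext k
        simp [Matrix.vecMul, dotProduct, Matrix.smul_apply, Matrix.one_apply,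
          mul_ite, mul_zero, Finset.sum_ite_eq', mul_comm]
      have h1 : Matrix.vecMul u A = μ • u := by
        have h2 := huA
        rwa [Matrix.vecMul_sub, hsm, sub_eq_zero] at h2
      have h3 := congrFun h1 i
      simpa [Matrix.vecMul, dotProduct] using h3
    obtain ⟨i0, -, hmax⟩ := Finset.exists_max_image Finset.univ
      (fun j => ‖u j‖) ⟨⟨0, hm0⟩, Finset.mem_univ _⟩
    set M := ‖u i0‖ with hMdef
    have hMpos : 0 < M := by
      rcases Function.ne_iff.mp hu0 with ⟨j, hj⟩
      calc (0 : ℝ) < ‖u j‖ := norm_pos_iff.mpr hj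
        _ ≤ M := hmax j (Finset.mem_univ j)
    set dR : ℝ := transMatrix m a q i0 i0 with hdRdef
    have hda := tm_diag ⟨ha0, ha1⟩ hq i0
    have hA00 : A i0 i0 = ((dR : ℝ) : ℂ) := rfl
    have heq : (μ - (dR : ℂ)) * u i0 = ∑ j ∈ Finset.univ.erase i0, u j * A j i0 := by
      have h2 := hkey i0
      rw [← Finset.add_sum_erase Finset.univ _ (Finset.mem_univ i0), hA00] at h2
      linear_combination -h2
    have hbound : ‖μ - (dR : ℂ)‖ * M ≤ (1 - dR) * M := by
      calc ‖μ - (dR : ℂ)‖ * M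
          = ‖(μ - (dR : ℂ)) * u i0‖ := (norm_mul _ _).symm
        _ = ‖∑ j ∈ Finset.univ.erase i0, u j * A j i0‖ := by rw [heq]
        _ ≤ ∑ j ∈ Finset.univ.erase i0, ‖u j * A j i0‖ :=
            norm_sum_le _ _
        _ ≤ ∑ j ∈ Finset.univ.erase i0, transMatrix m a q j i0 * M := by
            refine Finset.sum_le_sum fun j _ => ?_
            rw [norm_mul, show A j i0 = ((transMatrix m a q j i0 : ℝ) : ℂ) from rfl,
              Complex.norm_real, Real.norm_eq_abs, abs_of_nonneg (tm_nonneg ⟨ha0, ha1⟩ hq j i0), mul_comm]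
            exact mul_le_mul_of_nonneg_left (hmax j (Finset.mem_univ j))
              (tm_nonneg ⟨ha0, ha1⟩ hq j i0)
        _ = (∑ j ∈ Finset.univ.erase i0, transMatrix m a q j i0) * M :=
            (Finset.sum_mul _ _ _).symm
        _ = (1 - dR) * M := by
            have h3 : transMatrix m a q i0 i0
                + ∑ j ∈ Finset.univ.erase i0, transMatrix m a q j i0
                = ∑ j, transMatrix m a q j i0 :=
              Finset.add_sum_erase Finset.univ (fun j => transMatrix m a q j i0)
                (Finset.mem_univ i0)
            have h4 := tm_colsum (a := a) hqsum i0
            have h5 : (∑ j ∈ Finset.univ.erase i0, transMatrix m a q j i0) = 1 - dR := by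
              rw [h4] at h3
              linarith [h3, hdRdef]
            rw [h5]
    have h4 : ‖μ - (dR : ℂ)‖ ≤ 1 - dR :=
      le_of_mul_le_mul_right hbound hMpos
    by_contra hcon
    push_neg at hcon
    set x := μ.re with hxdef
    set y := μ.im with hydef
    have h5 : (x - dR) ^ 2 + y ^ 2 ≤ (1 - dR) ^ 2 := by
      have e : ‖μ - (dR : ℂ)‖ ^ 2 = (x - dR) ^ 2 + y ^ 2 := by
        rw [Complex.sq_norm, Complex.normSq_apply]
        simp [Complex.sub_re, Complex.sub_im]
        ring
      nlinarith [norm_nonneg (μ - (dR : ℂ))]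
    have h6 : (1 : ℝ) ≤ x ^ 2 + y ^ 2 := by
      have e : ‖μ‖ ^ 2 = x ^ 2 + y ^ 2 := by
        rw [Complex.sq_norm, Complex.normSq_apply]; ring
      nlinarith [norm_nonneg μ]
    have hd0 : 0 < dR := lt_of_lt_of_le ha0 hda.1
    have hd1 : dR ≤ 1 := hda.2
    have hxge : 1 ≤ x := by nlinarith
    have hxle : x ≤ 1 := by nlinarith [sq_nonneg y, sq_nonneg (x - 1)]
    have hx1 : x = 1 := le_antisymm hxle hxge
    have hy2 : y ^ 2 = 0 := le_antisymm (by nlinarith) (sq_nonneg y)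
    have hy0 : y = 0 := (pow_eq_zero_iff two_ne_zero).mp hy2
    exact hμ1 (Complex.ext (by simpa using hx1) (by simpa using hy0))
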